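/- Suppose ω : [0,∞) → ℝ is differentiable and satisfies both ω̇(t) + η₁(ω(t) + ω_l - ω_ref) ≥ 0 and -ω̇(t) + η₂(ω_h - ω(t) + ω_ref) ≥ 0 for all t, with η₁, η₂ > 0. If ω_ref - ω_l ≤ ω(0) ≤ ω_ref + ω_h, then ω_ref - ω_l ≤ ω(t) ≤ ω_ref + ω_h for all t ≥ 0. -/

import Mathlib

lemma mono_aux (f f' : ℝ → ℝ)
    (hf : ∀ t : ℝ, 0 ≤ t → HasDerivAt f (f' t) t)
    (hf' : ∀ t : ℝ, 0 ≤ t → 0 ≤ f' t) (h0 : 0 ≤ f 0) :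
    ∀ t : ℝ, 0 ≤ t → 0 ≤ f t := by
  intro t ht
  have hmono : MonotoneOn f (Set.Ici (0 : ℝ)) := by
    apply monotoneOn_of_deriv_nonneg (convex_Ici 0)
    · intro x hx
      exact ((hf x hx).continuousAt).continuousWithinAt
    · intro x hx
      rw [interior_Ici] at hx
      exact (hf x (le_of_lt hx)).differentiableAt.differentiableWithinAt
    · intro x hx
      rw [interior_Ici] at hx
      rw [(hf x (le_of_lt hx)).deriv]
      exact hf' x (le_of_lt hx)
  exact le_trans h0 (hmono Set.self_mem_Ici ht ht)

theorem stmt_4 (ω : ℝ → ℝ) (ω' : ℝ → ℝ)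
    (hω : ∀ t : ℝ, 0 ≤ t → HasDerivAt ω (ω' t) t)
    (η₁ η₂ ωl ωh ωref : ℝ) (hη₁ : 0 < η₁) (hη₂ : 0 < η₂)
    (hωl : 0 < ωl) (hωh : 0 < ωh)
    (hc1 : ∀ t : ℝ, 0 ≤ t → ω' t + η₁ * (ω t + ωl - ωref) ≥ 0)
    (hc2 : ∀ t : ℝ, 0 ≤ t → -ω' t + η₂ * (ωh - ω t + ωref) ≥ 0)
    (h0 : ωref - ωl ≤ ω 0 ∧ ω 0 ≤ ωref + ωh) :
    ∀ t : ℝ, 0 ≤ t → ωref - ωl ≤ ω t ∧ ω t ≤ ωref + ωh := by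
  intro t ht
  constructor
  · -- lower bound via g₁ t = exp(η₁ t) * (ω t - (ωref - ωl))
    have key : 0 ≤ Real.exp (η₁ * t) * (ω t - (ωref - ωl)) := by
      apply mono_aux (fun s => Real.exp (η₁ * s) * (ω s - (ωref - ωl)))
        (fun s => Real.exp (η₁ * s) * (ω' s + η₁ * (ω s + ωl - ωref)))
      · intro s hs
        have he : HasDerivAt (fun s => Real.exp (η₁ * s)) (η₁ * Real.exp (η₁ * s)) s := by
          simpa [mul_comm] using ((hasDerivAt_id s).const_mul η₁).exp
        have : HasDerivAt (fun y => Real.exp (η₁ * y) * (ω y - (ωref - ωl))) _ s :=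
          he.mul ((hω s hs).sub_const (ωref - ωl))
        convert this using 1
        ring
      · intro s hs
        exact mul_nonneg (Real.exp_nonneg _) (hc1 s hs)
      · simp only [mul_zero, Real.exp_zero, one_mul]
        linarith [h0.1]
      · exact ht
    nlinarith [Real.exp_pos (η₁ * t)]
  · have key : 0 ≤ Real.exp (η₂ * t) * ((ωref + ωh) - ω t) := by
      apply mono_aux (fun s => Real.exp (η₂ * s) * ((ωref + ωh) - ω s))
        (fun s => Real.exp (η₂ * s) * (-ω' s + η₂ * (ωh - ω s + ωref)))
      · intro s hs
        have he : HasDerivAt (fun s => Real.exp (η₂ * s)) (η₂ * Real.exp (η₂ * s)) s := by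
          simpa [mul_comm] using ((hasDerivAt_id s).const_mul η₂).exp
        have : HasDerivAt (fun y => Real.exp (η₂ * y) * ((ωref + ωh) - ω y)) _ s :=
          he.mul ((hω s hs).const_sub (ωref + ωh))
        convert this using 1
        ring
      · intro s hs
        exact mul_nonneg (Real.exp_nonneg _) (hc2 s hs)
      · simp only [mul_zero, Real.exp_zero, one_mul]
        linarith [h0.2]
      · exact ht
    nlinarith [Real.exp_pos (η₂ * t)]
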